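/- Suppose J : ℝⁿ × ℝᵐ → ℝ is differentiable at (θ, W(θ)), W : ℝⁿ → ℝᵐ is differentiable at θ, and for every ω ∈ ℝᵐ, J(θ, ω) ≤ J(θ, W(θ)) with equality characterizing W(θ) as a global maximizer of J(θ, ·); more generally assume W(θ') maximizes J(θ', ·) for all θ'. Then H is differentiable at θ and its derivative is the partial derivative of J in the first coordinate at (θ, W(θ)): for every v ∈ ℝⁿ, DH(θ)(v) = DJ(θ, W(θ))(v, 0). -/

import Mathlib

/-- Gradient of H: if J is differentiable at (θ, W θ), W is differentiable at θ, and
W(θ') globally maximizes J(θ', ·) for every θ', then H(θ') = J(θ', W θ') is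
differentiable at θ with derivative v ↦ DJ(θ, W θ)(v, 0). -/
theorem gradient_of_H {n m : ℕ}
    (J : EuclideanSpace ℝ (Fin n) × EuclideanSpace ℝ (Fin m) → ℝ)
    (W : EuclideanSpace ℝ (Fin n) → EuclideanSpace ℝ (Fin m))
    (θ : EuclideanSpace ℝ (Fin n))
    (DJ : (EuclideanSpace ℝ (Fin n) × EuclideanSpace ℝ (Fin m)) →L[ℝ] ℝ)
    (hJ : HasFDerivAt J DJ (θ, W θ))
    (DW : EuclideanSpace ℝ (Fin n) →L[ℝ] EuclideanSpace ℝ (Fin m))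
    (hWdiff : HasFDerivAt W DW θ)
    (hmax : ∀ θ' ω, J (θ', ω) ≤ J (θ', W θ')) :
    DifferentiableAt ℝ (fun θ' => J (θ', W θ')) θ ∧
      ∀ v, fderiv ℝ (fun θ' => J (θ', W θ')) θ v = DJ (v, 0) := by
  -- H has derivative DJ ∘ (id, DW)
  have hH : HasFDerivAt (fun θ' => J (θ', W θ'))
      (DJ.comp ((ContinuousLinearMap.id ℝ _).prod DW)) θ :=
    hJ.comp θ (HasFDerivAt.prodMk (hasFDerivAt_id θ) hWdiff)
  -- partial derivative in ω vanishes at the maximizer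
  have hpart : HasFDerivAt (fun ω => J (θ, ω))
      (DJ.comp ((0 : _ →L[ℝ] EuclideanSpace ℝ (Fin n)).prod (ContinuousLinearMap.id ℝ _)))
      (W θ) :=
    hJ.comp (W θ) (HasFDerivAt.prodMk (hasFDerivAt_const θ _) (hasFDerivAt_id _))
  have hloc : IsLocalMax (fun ω => J (θ, ω)) (W θ) :=
    Filter.Eventually.of_forall (fun ω => hmax θ ω)
  have hzero := hloc.hasFDerivAt_eq_zero hpart
  have hzero' : ∀ w, DJ (0, w) = 0 := by
    intro w
    have := congrArg (fun L => L w) hzero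
    simpa using this
  refine ⟨hH.differentiableAt, ?_⟩
  intro v
  rw [hH.fderiv]
  have : ((v, DW v) : EuclideanSpace ℝ (Fin n) × EuclideanSpace ℝ (Fin m))
      = (v, 0) + (0, DW v) := by simp
  simp only [ContinuousLinearMap.comp_apply, ContinuousLinearMap.prod_apply,
    ContinuousLinearMap.id_apply, this, map_add, hzero' (DW v), add_zero]
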